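/- Fix γ ≥ 3 and let M(n,γ) denote the maximum, over graphs G on n vertices with γ(G) = γ, of the number of dominating sets of size γ. Then C(n,γ) − O(log^γ n · n^{γ−1/(γ−1)}) ≤ M(n,γ) ≤ C(n,γ) − Ω(n^{γ−1−1/(γ−1)}). -/

import Mathlib

open Filter

def Dominates {V : Type*} (G : SimpleGraph V) (S : Finset V) : Prop :=
  ∀ v ∉ S, ∃ u ∈ S, G.Adj u v

noncomputable def domCount {V : Type*} [Fintype V] (G : SimpleGraph V) (k : ℕ) : ℕ :=
  letI : DecidablePred (fun S : Finset V => Dominates G S) := Classical.decPred _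
  ((Finset.powersetCard k Finset.univ).filter (fun S => Dominates G S)).card

noncomputable def domNum {V : Type*} [Fintype V] (G : SimpleGraph V) : ℕ :=
  sInf {k | ∃ S : Finset V, S.card = k ∧ Dominates G S}

namespace Stmt18

open Finset


lemma enc_lt {m : ℕ} (hm : 0 < m) {k : ℕ} {u : ℕ → ℕ} (hu : ∀ c < k, u c < m) :
    (∑ c ∈ Finset.range k, u c * m ^ c) < m ^ k := by
  induction k with
  | zero => simpa using Nat.one_pos
  | succ k ih =>
    rw [Finset.sum_range_succ, pow_succ]
    have h1 := ih (fun c hc => hu c (hc.trans (Nat.lt_succ_self k)))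
    have h2 : u k ≤ m - 1 := Nat.le_sub_one_of_lt (hu k (Nat.lt_succ_self k))
    have h3 : u k * m ^ k ≤ (m - 1) * m ^ k := Nat.mul_le_mul_right _ h2
    have h4 : m ^ k + (m - 1) * m ^ k = m ^ k * m := by
      have : 1 + (m - 1) = m := by omega
      calc m ^ k + (m - 1) * m ^ k = (1 + (m - 1)) * m ^ k := by ring
        _ = m ^ k * m := by rw [this]; ring
    omega

lemma enc_digit {m : ℕ} (hm : 0 < m) {k : ℕ} {u : ℕ → ℕ} (hu : ∀ c < k, u c < m)
    {j : ℕ} (hj : j < k) :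
    (∑ c ∈ Finset.range k, u c * m ^ c) / m ^ j % m = u j := by
  induction k with
  | zero => omega
  | succ k ih =>
    rw [Finset.sum_range_succ]
    have hu' : ∀ c < k, u c < m := fun c hc => hu c (hc.trans (Nat.lt_succ_self k))
    rcases Nat.lt_or_ge j k with hjk | hjk
    · have hdecomp : u k * m ^ k = (u k * m ^ (k - j - 1) * m) * m ^ j := by
        rw [mul_assoc, mul_assoc, ← pow_succ', ← pow_add]
        congr 2
        omega
      rw [hdecomp, Nat.add_mul_div_right _ _ (pow_pos hm j)]
      rw [Nat.mul_comm (u k * m ^ (k - j - 1)) m]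
      rw [Nat.add_mul_mod_self_left]
      exact ih hu' hjk
    · have hjeq : j = k := by omega
      subst hjeq
      rw [Nat.add_mul_div_right _ _ (pow_pos hm j),
        Nat.div_eq_of_lt (enc_lt hm hu'), Nat.zero_add,
        Nat.mod_eq_of_lt (hu j (Nat.lt_succ_self j))]

lemma digit_mod_pow {m t c : ℕ} (hm : 0 < m) (hc : c < t) (x : ℕ) :
    x % m ^ t / m ^ c % m = x / m ^ c % m := by
  conv_rhs => rw [← Nat.div_add_mod x (m ^ t)]
  have h1 : m ^ t * (x / m ^ t) = (x / m ^ t * m ^ (t - c - 1) * m) * m ^ c := by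
    rw [mul_assoc, mul_assoc, ← pow_succ', ← pow_add]
    have : m ^ t = m ^ (t - c - 1 + (c+1)) := by congr 1; omega
    rw [this]; ring
  rw [Nat.add_comm (m ^ t * (x / m ^ t)) (x % m ^ t), h1,
    Nat.add_mul_div_right _ _ (pow_pos hm c),
    Nat.mul_comm _ m, Nat.add_mul_mod_self_left]

def mpar (t n : ℕ) : ℕ := Nat.findGreatest (fun m => (t+1) * m^t ≤ n) n

lemma mpar_le (t n : ℕ) (ht : 1 ≤ t) : (t+1) * (mpar t n)^t ≤ n := by
  have := Nat.findGreatest_spec (P := fun m => (t+1) * m^t ≤ n) (m := 0) (Nat.zero_le n)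
    (by show (t+1) * 0^t ≤ n; rw [Nat.zero_pow (by omega : 0 < t)]; simp)
  exact this

lemma mpar_lower {t n : ℕ} (ht : 2 ≤ t) (hn : 1 ≤ n) :
    n < (t+1) * (mpar t n + 1)^t := by
  by_contra h
  push_neg at h
  have hlt : mpar t n < n := by
    rcases Nat.lt_or_ge (mpar t n) n with h' | h'
    · exact h'
    · exfalso
      have h1 : mpar t n ≤ n := Nat.findGreatest_le n
      have h2 : mpar t n = n := le_antisymm h1 h'
      have h3 : (t+1) * n^t ≤ n := by
        have := mpar_le t n (by omega); rwa [h2] at this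
      have h4 : n ≤ n ^ t := Nat.le_self_pow (by omega) n
      nlinarith
  exact Nat.findGreatest_is_greatest (Nat.lt_succ_self _) hlt h

lemma mpar_ge {t n : ℕ} (ht : 2 ≤ t) (hn : (t+1)^(t+1) * 2^(t+1) ≤ n) :
    t + 1 ≤ mpar t n := by
  have hn1 : 1 ≤ n := le_trans (Nat.one_le_iff_ne_zero.mpr (by positivity)) hn
  have h := mpar_lower ht hn1
  by_contra hcon
  push_neg at hcon
  have h2 : mpar t n + 1 ≤ t + 1 := by omega
  have h3 : (t+1) * (mpar t n + 1)^t ≤ (t+1) * (t+1)^t :=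
    Nat.mul_le_mul_left _ (Nat.pow_le_pow_left h2 t)
  have h4 : (t+1) * (t+1)^t = (t+1)^(t+1) := by rw [← pow_succ']
  have h5 : (t+1)^(t+1) * 1 ≤ (t+1)^(t+1) * 2^(t+1) :=
    Nat.mul_le_mul_left _ (Nat.one_le_two_pow)
  omega


def ψ (m x c : ℕ) : ℕ := x / m ^ c % m

lemma ψ_lt {m : ℕ} (hm : 0 < m) (x c : ℕ) : ψ m x c < m := Nat.mod_lt _ hm

def Gc (t n : ℕ) : SimpleGraph (Fin n) where
  Adj u v := u ≠ v ∧ ∀ c < t, ψ (mpar t n) u c ≠ ψ (mpar t n) v c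
  symm := by
    constructor
    rintro u v ⟨h1, h2⟩
    exact ⟨h1.symm, fun c hc => (h2 c hc).symm⟩
  loopless := by constructor; rintro v ⟨h1, _⟩; exact h1 rfl

section Params

variable {t n : ℕ}

lemma exists_fiber (ht : 2 ≤ t) (hn : (t+1)^(t+1) * 2^(t+1) ≤ n)
    {u : ℕ → ℕ} (hu : ∀ c < t, u c < mpar t n) (S : Finset (Fin n)) (hS : S.card ≤ t) :
    ∃ v : Fin n, v ∉ S ∧ ∀ c < t, ψ (mpar t n) v c = u c := by
  set m := mpar t n with hmdef
  have hm : 0 < m := by have := mpar_ge ht hn; omega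
  have hq : (t+1) * m^t ≤ n := mpar_le t n (by omega)
  set q := m ^ t with hqdef
  have hqpos : 0 < q := pow_pos hm t
  set r := ∑ c ∈ Finset.range t, u c * m ^ c with hrdef
  have hr : r < q := enc_lt hm hu
  have hn0 : 0 < n := by
    calc 0 < (t+1) * m^t := by positivity
    _ ≤ n := hq
  -- the fiber
  set F : Finset (Fin n) := Finset.univ.filter (fun x : Fin n => (x : ℕ) % q = r) with hF
  have hcardF : t + 1 ≤ F.card := by
    have hmap : ∀ i ∈ Finset.range (t+1), r + i * q < n := by
      intro i hi
      rw [Finset.mem_range] at hi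
      have : r + i * q < (i + 1) * q := by nlinarith
      have h2 : (i+1) * q ≤ (t+1) * q := by
        apply Nat.mul_le_mul_right; omega
      omega
    have := Finset.card_le_card_of_injOn
      (f := fun i : ℕ => if h : r + i * q < n then (⟨r + i * q, h⟩ : Fin n) else ⟨0, hn0⟩)
      (s := Finset.range (t+1)) (t := F) ?_ ?_
    · simpa using this
    · intro i hi
      dsimp only
      rw [dif_pos (hmap i hi)]
      simp only [hF, Finset.mem_filter, Finset.mem_univ, true_and]
      exact Finset.mem_coe.mpr (Finset.mem_filter.mpr ⟨Finset.mem_univ _, (Nat.add_mul_mod_self_right r i q).trans (Nat.mod_eq_of_lt hr)⟩)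
    · intro i hi j hj hij
      simp only [Finset.coe_range, Set.mem_Iio] at hi hj
      dsimp only at hij
      rw [dif_pos (hmap i (Finset.mem_range.mpr hi)), dif_pos (hmap j (Finset.mem_range.mpr hj))] at hij
      rw [Fin.mk.injEq] at hij
      have := Nat.eq_of_mul_eq_mul_right hqpos (by omega : i * q = j * q)
      omega
  have hex : ∃ v, v ∈ F ∧ v ∉ S := by
    have : ¬ (F ⊆ S) := fun hsub => by
      have := Finset.card_le_card hsub; omega
    rcases Finset.not_subset.mp this with ⟨v, hv1, hv2⟩
    exact ⟨v, hv1, hv2⟩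
  rcases hex with ⟨v, hvF, hvS⟩
  refine ⟨v, hvS, fun c hc => ?_⟩
  simp only [hF, Finset.mem_filter] at hvF
  have hvq : (v : ℕ) % q = r := hvF.2
  calc ψ m (v : ℕ) c = (v : ℕ) % m ^ t / m ^ c % m := (digit_mod_pow hm hc ((v : ℕ))).symm
    _ = r / m ^ c % m := by rw [← hqdef, hvq]
    _ = u c := enc_digit hm hu hc

lemma not_dominates_small (ht : 2 ≤ t) (hn : (t+1)^(t+1) * 2^(t+1) ≤ n)
    (S : Finset (Fin n)) (hS : S.card ≤ t) : ¬ Dominates (Gc t n) S := by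
  set m := mpar t n with hmdef
  have hm : 0 < m := by have := mpar_ge ht hn; omega
  set k := S.card with hk
  have e := S.orderIsoOfFin hk.symm
  set u : ℕ → ℕ := fun c => if h : c < k then ψ m ((e ⟨c, h⟩ : Fin n) : ℕ) c else 0 with hudef
  have hu : ∀ c < t, u c < m := by
    intro c hc
    by_cases h : c < k
    · simp only [hudef, dif_pos h]; exact ψ_lt hm _ _
    · simp only [hudef, dif_neg h]; exact hm
  obtain ⟨v, hvS, hv⟩ := exists_fiber ht hn hu S hS
  intro hdom
  obtain ⟨a, haS, hadj⟩ := hdom v hvS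
  -- a = e i for some i
  obtain ⟨i, hi⟩ : ∃ i : Fin k, (e i : Fin n) = a := ⟨e.symm ⟨a, haS⟩, by simp⟩
  have hik : (i : ℕ) < t := lt_of_lt_of_le i.2 hS
  have : ψ m (a : ℕ) (i : ℕ) = ψ m (v : ℕ) (i : ℕ) := by
    rw [hv (i : ℕ) hik, hudef]
    simp only [dif_pos i.2]
    congr 1
    rw [← hi]
  exact hadj.2 (i : ℕ) hik (by rw [← hmdef]; exact this)

lemma exists_dominating (ht : 2 ≤ t) (hn : (t+1)^(t+1) * 2^(t+1) ≤ n) :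
    ∃ S : Finset (Fin n), S.card = t + 1 ∧ Dominates (Gc t n) S := by
  set m := mpar t n with hmdef
  have hm1 : t + 1 ≤ m := mpar_ge ht hn
  have hm : 0 < m := by omega
  have hd : ∀ i : Fin (t+1), ∃ v : Fin n, ∀ c < t, ψ m (v : ℕ) c = (i : ℕ) := by
    intro i
    obtain ⟨v, _, hv⟩ := exists_fiber ht hn (u := fun _ => (i : ℕ))
      (fun c _ => lt_of_lt_of_le i.2 hm1) ∅ (by simp)
    exact ⟨v, hv⟩
  choose d hdspec using hd
  have hdi : Function.Injective d := by
    intro i j hij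
    have h0t : (0 : ℕ) < t := by omega
    have := (hdspec i 0 h0t).symm.trans ((congrArg (fun x : Fin n => ψ m (x : ℕ) 0) hij).trans (hdspec j 0 h0t))
    exact Fin.ext this
  refine ⟨Finset.univ.image d, ?_, ?_⟩
  · rw [Finset.card_image_of_injective _ hdi, Finset.card_univ, Fintype.card_fin]
  · intro v hv
    by_contra hcon
    push_neg at hcon
    have hvne : ∀ i : Fin (t+1), d i ≠ v := by
      intro i hiv
      exact hv (hiv ▸ Finset.mem_image_of_mem d (Finset.mem_univ i))
    have hc : ∀ i : Fin (t+1), ∃ c < t, ψ m ((v : Fin n) : ℕ) c = (i : ℕ) := by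
      intro i
      have hna : ¬ ((d i ≠ v) ∧ ∀ c < t, ψ m ((d i : Fin n) : ℕ) c ≠ ψ m ((v : Fin n) : ℕ) c) :=
        hcon (d i) (Finset.mem_image_of_mem d (Finset.mem_univ i))
      push_neg at hna
      rcases hna (hvne i) with ⟨c, hct, hceq⟩
      exact ⟨c, hct, by rw [← hceq, hdspec i c hct]⟩
    choose f hf1 hf2 using hc
    have : Fintype.card (Fin t) < Fintype.card (Fin (t+1)) := by simp
    obtain ⟨i, j, hij, hfij⟩ := Fintype.exists_ne_map_eq_of_card_lt
      (fun i : Fin (t+1) => (⟨f i, hf1 i⟩ : Fin t)) this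
    apply hij
    apply Fin.ext
    have hi := hf2 i
    have hj := hf2 j
    rw [show f i = f j from congrArg Fin.val hfij] at hi
    omega


lemma dominates_mono {V : Type*} {G : SimpleGraph V} {S T : Finset V}
    (hST : S ⊆ T) (h : Dominates G S) : Dominates G T := by
  intro v hv
  obtain ⟨u, hu, hadj⟩ := h v (fun hvS => hv (hST hvS))
  exact ⟨u, hST hu, hadj⟩

lemma domNum_Gc (ht : 2 ≤ t) (hn : (t+1)^(t+1) * 2^(t+1) ≤ n) :
    domNum (Gc t n) = t + 1 := by
  obtain ⟨S, hScard, hSdom⟩ := exists_dominating ht hn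
  have hne : {k | ∃ S : Finset (Fin n), S.card = k ∧ Dominates (Gc t n) S}.Nonempty :=
    ⟨t + 1, S, hScard, hSdom⟩
  have hlb : ∀ k ∈ {k | ∃ S : Finset (Fin n), S.card = k ∧ Dominates (Gc t n) S},
      t + 1 ≤ k := by
    rintro k ⟨T, hTcard, hTdom⟩
    by_contra hcon
    push_neg at hcon
    have hkt : k ≤ t := by omega
    have htn : t ≤ n := by
      have h1 : (t+1)^(t+1) * 2^(t+1) ≥ t := by
        calc t ≤ (t+1)^(t+1) := le_trans (Nat.le_succ t) (Nat.le_self_pow (by omega) _)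
        _ ≤ (t+1)^(t+1) * 2^(t+1) := Nat.le_mul_of_pos_right _ (by positivity)
      omega
    obtain ⟨T', hTT', _, hT'card⟩ := Finset.exists_subsuperset_card_eq
      (Finset.subset_univ T) (le_trans hTcard.le hkt) (by simpa using htn)
    exact not_dominates_small ht hn T' hT'card.le (dominates_mono hTT' hTdom)
  refine le_antisymm (Nat.sInf_le ⟨S, hScard, hSdom⟩) ?_
  exact hlb _ (Nat.sInf_mem hne)

lemma card_digit_fiber (hm : 0 < mpar t n) (c val : ℕ) :
    (Finset.univ.filter (fun x : Fin n => ψ (mpar t n) x c = val)).card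
      ≤ (mpar t n)^c * (n / (mpar t n)^(c+1) + 1) := by
  set m := mpar t n with hmdef
  have hmc : 0 < m ^ c := pow_pos hm c
  have hmc1 : 0 < m ^ (c+1) := pow_pos hm _
  have key := Finset.card_le_card_of_injOn
    (f := fun x : Fin n => ((⟨(x : ℕ) % m ^ c, Nat.mod_lt _ hmc⟩ : Fin (m ^ c)),
      (⟨(x : ℕ) / m ^ (c+1), by
        have : (x : ℕ) / m ^ (c+1) ≤ n / m ^ (c+1) :=
          Nat.div_le_div_right (le_of_lt x.2)
        omega⟩ : Fin (n / m ^ (c+1) + 1))))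
    (s := Finset.univ.filter (fun x : Fin n => ψ m x c = val))
    (t := (Finset.univ : Finset (Fin (m ^ c) × Fin (n / m ^ (c+1) + 1))))
    (fun x _ => Finset.mem_univ _) ?_
  · calc _ ≤ _ := key
    _ = m ^ c * (n / m ^ (c+1) + 1) := by
      rw [Finset.card_univ]
      simp [Fintype.card_prod]
  · intro x hx y hy hxy
    simp only [Finset.coe_filter, Set.mem_setOf_eq] at hx hy
    rw [Prod.mk.injEq, Fin.mk.injEq, Fin.mk.injEq] at hxy
    obtain ⟨h1, h2⟩ := hxy
    have hrec : ∀ z : ℕ, z % m ^ (c+1) = z % m ^ c + m ^ c * (z / m ^ c % m) := by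
      intro z
      rw [pow_succ]
      exact Nat.mod_mul
    have hx2 : (x : ℕ) % m ^ (c+1) = (y : ℕ) % m ^ (c+1) := by
      have hdig : (x : ℕ) / m ^ c % m = (y : ℕ) / m ^ c % m := hx.2.trans hy.2.symm
      rw [hrec, hrec, h1, hdig]
    have : (x : ℕ) = (y : ℕ) := by
      conv_lhs => rw [← Nat.div_add_mod (x : ℕ) (m ^ (c+1))]
      conv_rhs => rw [← Nat.div_add_mod (y : ℕ) (m ^ (c+1))]
      rw [hx2, h2]
    exact Fin.ext this

lemma nonDom_count (ht : 2 ≤ t) (hn : (t+1)^(t+1) * 2^(t+1) ≤ n) :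
    letI : DecidablePred (fun S : Finset (Fin n) => Dominates (Gc t n) S) :=
      Classical.decPred _
    ((Finset.powersetCard (t+1) Finset.univ).filter
        (fun S => ¬ Dominates (Gc t n) S)).card
      ≤ n * (∑ c ∈ Finset.range t, (mpar t n)^c * (n / (mpar t n)^(c+1) + 1))^(t+1) := by
  letI : DecidablePred (fun S : Finset (Fin n) => Dominates (Gc t n) S) :=
    Classical.decPred _
  classical
  set m := mpar t n with hmdef
  have hm : 0 < m := by have := mpar_ge ht hn; omega
  set Dn := ∑ c ∈ Finset.range t, m^c * (n / m^(c+1) + 1) with hDn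
  set Miss : Fin n → Finset (Fin n) := fun v =>
    Finset.univ.filter (fun x : Fin n => x ≠ v ∧ ∃ c < t, ψ m x c = ψ m v c) with hMiss
  have hMissCard : ∀ v, (Miss v).card ≤ Dn := by
    intro v
    have hsub : Miss v ⊆ (Finset.range t).biUnion
        (fun c => Finset.univ.filter (fun x : Fin n => ψ m x c = ψ m v c)) := by
      intro x hx
      simp only [hMiss, Finset.mem_filter, Finset.mem_univ, true_and] at hx
      obtain ⟨-, c, hct, hc⟩ := hx
      exact Finset.mem_biUnion.mpr ⟨c, Finset.mem_range.mpr hct,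
        Finset.mem_filter.mpr ⟨Finset.mem_univ _, hc⟩⟩
    calc (Miss v).card ≤ _ := Finset.card_le_card hsub
      _ ≤ ∑ c ∈ Finset.range t,
          (Finset.univ.filter (fun x : Fin n => ψ m x c = ψ m v c)).card :=
        Finset.card_biUnion_le
      _ ≤ Dn := Finset.sum_le_sum (fun c _ => card_digit_fiber hm c _)
  have hsub : (Finset.powersetCard (t+1) Finset.univ).filter
      (fun S => ¬ Dominates (Gc t n) S) ⊆
      Finset.univ.biUnion (fun v => Finset.powersetCard (t+1) (Miss v)) := by
    intro S hS
    rw [Finset.mem_filter] at hS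
    obtain ⟨hSmem, hSnd⟩ := hS
    rw [Finset.mem_powersetCard] at hSmem
    rw [Dominates] at hSnd
    push_neg at hSnd
    obtain ⟨v, hvS, hv⟩ := hSnd
    refine Finset.mem_biUnion.mpr ⟨v, Finset.mem_univ _, ?_⟩
    rw [Finset.mem_powersetCard]
    refine ⟨?_, hSmem.2⟩
    intro x hxS
    have hxv : x ≠ v := fun h => hvS (h ▸ hxS)
    have hnadj : ¬ (Gc t n).Adj x v := hv x hxS
    have : ¬ (x ≠ v ∧ ∀ c < t, ψ m (x : ℕ) c ≠ ψ m (v : ℕ) c) := hnadj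
    push_neg at this
    obtain ⟨c, hct, hc⟩ := this hxv
    simp only [hMiss, Finset.mem_filter, Finset.mem_univ, true_and]
    exact ⟨hxv, c, hct, hc⟩
  calc _ ≤ (Finset.univ.biUnion (fun v => Finset.powersetCard (t+1) (Miss v))).card :=
      Finset.card_le_card hsub
    _ ≤ ∑ v : Fin n, (Finset.powersetCard (t+1) (Miss v)).card := Finset.card_biUnion_le
    _ ≤ ∑ _v : Fin n, Dn ^ (t+1) := by
      apply Finset.sum_le_sum
      intro v _
      rw [Finset.card_powersetCard]
      calc ((Miss v).card).choose (t+1) ≤ Dn.choose (t+1) :=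
          Nat.choose_le_choose _ (hMissCard v)
        _ ≤ Dn ^ (t+1) := Nat.choose_le_pow _ _
    _ = n * Dn ^ (t+1) := by simp [Finset.sum_const, Finset.card_univ]

end Params


lemma domCount_add_eq {n : ℕ} (G : SimpleGraph (Fin n)) (k : ℕ) :
    domCount G k +
      (letI : DecidablePred (fun S : Finset (Fin n) => Dominates G S) := Classical.decPred _
       ((Finset.powersetCard k Finset.univ).filter (fun S => ¬ Dominates G S)).card)
      = n.choose k := by
  letI : DecidablePred (fun S : Finset (Fin n) => Dominates G S) := Classical.decPred _
  rw [domCount, Finset.card_filter_add_card_filter_not,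
    Finset.card_powersetCard, Finset.card_univ, Fintype.card_fin]

lemma domCount_le {n : ℕ} (G : SimpleGraph (Fin n)) (k : ℕ) :
    domCount G k ≤ n.choose k := by
  have := domCount_add_eq G k
  omega

lemma upper_per_graph {n t : ℕ} (ht : 2 ≤ t) (htn : t + 1 ≤ n)
    (G : SimpleGraph (Fin n)) (h : domNum G = t + 1) :
    ∃ mstar : ℕ,
      Nat.choose n t ≤ n * mstar ^ t ∧
      mstar.choose (t+1) + domCount G (t+1) ≤ n.choose (t+1) := by
  letI : DecidablePred (fun S : Finset (Fin n) => Dominates G S) := Classical.decPred _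
  classical
  set Miss : Fin n → Finset (Fin n) := fun v =>
    Finset.univ.filter (fun u : Fin n => u ≠ v ∧ ¬ G.Adj u v) with hMiss
  have h1 : ∀ A : Finset (Fin n), A.card = t → ¬ Dominates G A := by
    intro A hA hdom
    have : domNum G ≤ t := Nat.sInf_le ⟨A, hA, hdom⟩
    omega
  have hne : (Finset.univ : Finset (Fin n)).Nonempty :=
    ⟨⟨0, by omega⟩, Finset.mem_univ _⟩
  obtain ⟨v₀, -, hv₀⟩ := Finset.exists_max_image Finset.univ (fun v => (Miss v).card) hne
  refine ⟨(Miss v₀).card, ?_, ?_⟩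
  · have hsub : Finset.powersetCard t (Finset.univ : Finset (Fin n)) ⊆
        Finset.univ.biUnion (fun v => Finset.powersetCard t (Miss v)) := by
      intro A hA
      rw [Finset.mem_powersetCard] at hA
      have hnd := h1 A hA.2
      rw [Dominates] at hnd
      push_neg at hnd
      obtain ⟨v, hvA, hv⟩ := hnd
      refine Finset.mem_biUnion.mpr ⟨v, Finset.mem_univ _, ?_⟩
      rw [Finset.mem_powersetCard]
      refine ⟨?_, hA.2⟩
      intro x hxA
      simp only [hMiss, Finset.mem_filter, Finset.mem_univ, true_and]
      exact ⟨fun hh => hvA (hh ▸ hxA), hv x hxA⟩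
    calc n.choose t
        = (Finset.powersetCard t (Finset.univ : Finset (Fin n))).card := by
          rw [Finset.card_powersetCard, Finset.card_univ, Fintype.card_fin]
      _ ≤ (Finset.univ.biUnion (fun v => Finset.powersetCard t (Miss v))).card :=
          Finset.card_le_card hsub
      _ ≤ ∑ v : Fin n, (Finset.powersetCard t (Miss v)).card := Finset.card_biUnion_le
      _ ≤ ∑ _v : Fin n, (Miss v₀).card ^ t := by
          apply Finset.sum_le_sum
          intro v _
          rw [Finset.card_powersetCard]
          calc ((Miss v).card).choose t ≤ ((Miss v₀).card).choose t :=
              Nat.choose_le_choose _ (hv₀ v (Finset.mem_univ v))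
            _ ≤ (Miss v₀).card ^ t := Nat.choose_le_pow _ _
      _ = n * (Miss v₀).card ^ t := by
          simp [Finset.sum_const, Finset.card_univ]
  · have hsub2 : Finset.powersetCard (t+1) (Miss v₀) ⊆
        (Finset.powersetCard (t+1) (Finset.univ : Finset (Fin n))).filter
          (fun S => ¬ Dominates G S) := by
      intro S hS
      rw [Finset.mem_powersetCard] at hS
      have hv₀S : v₀ ∉ S := by
        intro hv
        have := hS.1 hv
        simp only [hMiss, Finset.mem_filter, Finset.mem_univ, true_and] at this
        exact this.1 rfl
      rw [Finset.mem_filter, Finset.mem_powersetCard]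
      refine ⟨⟨Finset.subset_univ _, hS.2⟩, ?_⟩
      intro hdom
      obtain ⟨u, huS, hadj⟩ := hdom v₀ hv₀S
      have := hS.1 huS
      simp only [hMiss, Finset.mem_filter, Finset.mem_univ, true_and] at this
      exact this.2 hadj
    have hcard : ((Miss v₀).card).choose (t+1) ≤
        ((Finset.powersetCard (t+1) (Finset.univ : Finset (Fin n))).filter
          (fun S => ¬ Dominates G S)).card := by
      calc ((Miss v₀).card).choose (t+1)
          = (Finset.powersetCard (t+1) (Miss v₀)).card :=
            (Finset.card_powersetCard _ _).symm
        _ ≤ _ := Finset.card_le_card hsub2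
    have hid := domCount_add_eq G (t+1)
    omega

lemma le_rpow_inv {a b : ℝ} {k : ℕ} (hk : 0 < k) (ha : 0 ≤ a) (h : a ^ k ≤ b) :
    a ≤ b ^ (1 / (k:ℝ)) := by
  have hkR : (0:ℝ) < (k:ℝ) := by exact_mod_cast hk
  have := Real.rpow_le_rpow (by positivity) h (by positivity : (0:ℝ) ≤ 1/(k:ℝ))
  rwa [← Real.rpow_natCast a k, ← Real.rpow_mul ha, mul_one_div,
    div_self (ne_of_gt hkR), Real.rpow_one] at this

lemma rpow_inv_le {a b : ℝ} {k : ℕ} (hk : 0 < k) (ha : 0 ≤ a) (hb : 0 ≤ b)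
    (h : b ≤ a ^ k) : b ^ (1 / (k:ℝ)) ≤ a := by
  have hkR : (0:ℝ) < (k:ℝ) := by exact_mod_cast hk
  have := Real.rpow_le_rpow hb h (by positivity : (0:ℝ) ≤ 1/(k:ℝ))
  rwa [← Real.rpow_natCast a k, ← Real.rpow_mul ha, mul_one_div,
    div_self (ne_of_gt hkR), Real.rpow_one] at this

end Stmt18

set_option maxHeartbeats 2000000 in
theorem stmt18 (γ : ℕ) (hγ : 3 ≤ γ)
    (M : ℕ → ℕ)
    (hM : ∀ n, M n = sSup {k | ∃ G : SimpleGraph (Fin n),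
      domNum G = γ ∧ domCount G γ = k}) :
    (∃ C : ℝ, ∃ N : ℕ, ∀ n : ℕ, N ≤ n →
      (Nat.choose n γ : ℝ) -
          C * Real.log n ^ γ * (n : ℝ) ^ ((γ : ℝ) - 1 / ((γ : ℝ) - 1)) ≤
        (M n : ℝ)) ∧
    (∃ c : ℝ, 0 < c ∧ ∃ N : ℕ, ∀ n : ℕ, N ≤ n →
      (M n : ℝ) ≤ (Nat.choose n γ : ℝ) -
        c * (n : ℝ) ^ ((γ : ℝ) - 1 - 1 / ((γ : ℝ) - 1))) := by
  have ht : 2 ≤ γ - 1 := by omega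
  set t := γ - 1 with htdef
  have hγt : γ = t + 1 := by omega
  have htR : (γ:ℝ) = (t:ℝ) + 1 := by rw [hγt]; push_cast; ring
  have htne : (t:ℝ) ≠ 0 := by
    have : (0:ℝ) < (t:ℝ) := by exact_mod_cast (by omega : 0 < t)
    linarith
  have htpos : (0:ℝ) < (t:ℝ) := by exact_mod_cast (by omega : 0 < t)
  have ht2R : (2:ℝ) ≤ (t:ℝ) := by exact_mod_cast ht
  -- bounded above
  have hbdd : ∀ n : ℕ, BddAbove {k | ∃ G : SimpleGraph (Fin n),
      domNum G = γ ∧ domCount G γ = k} := by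
    intro n
    refine ⟨n.choose γ, ?_⟩
    rintro k ⟨G, -, rfl⟩
    exact Stmt18.domCount_le G γ
  -- the key exponent computation
  have hexp1 : ∀ n : ℕ, 1 ≤ n →
      (n:ℝ) * ((n:ℝ) ^ (1 - 1/(t:ℝ))) ^ γ = (n:ℝ) ^ ((γ:ℝ) - 1/((γ:ℝ)-1)) := by
    intro n hn
    have hn0 : (0:ℝ) < (n:ℝ) := by exact_mod_cast hn
    rw [← Real.rpow_natCast ((n:ℝ) ^ (1 - 1/(t:ℝ))) γ, ← Real.rpow_mul hn0.le]
    rw [show (n:ℝ) * (n:ℝ) ^ ((1 - 1/(t:ℝ)) * (γ:ℕ)) =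
        (n:ℝ) ^ ((1:ℝ) + (1 - 1/(t:ℝ)) * (γ:ℕ)) by
      rw [Real.rpow_add hn0, Real.rpow_one]]
    congr 1
    rw [htR]
    field_simp
    rw [add_sub_cancel_right, mul_sub, mul_one_div_cancel htne]; ring
  constructor
  · -- LOWER BOUND via construction
    refine ⟨(4*(t:ℝ)*((t:ℝ)+1))^γ, (t+1)^(t+1) * 2^(t+1) + 3, fun n hn => ?_⟩
    have hn3 : 3 ≤ n := by omega
    have hn1 : 1 ≤ n := by omega
    have hnn : (t+1)^(t+1) * 2^(t+1) ≤ n := by omega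
    have hn0 : (0:ℝ) < (n:ℝ) := by exact_mod_cast hn1
    have hdom := Stmt18.domNum_Gc ht hnn
    have hMn : domCount (Stmt18.Gc t n) γ ≤ M n := by
      rw [hM n]
      exact le_csSup (hbdd n) ⟨Stmt18.Gc t n, by rw [hdom, hγt], rfl⟩
    -- the count of non-dominating sets
    have hid := Stmt18.domCount_add_eq (Stmt18.Gc t n) γ
    set Nbad : ℕ :=
      (letI : DecidablePred (fun S : Finset (Fin n) => Dominates (Stmt18.Gc t n) S) :=
        Classical.decPred _
       ((Finset.powersetCard γ Finset.univ).filter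
          (fun S => ¬ Dominates (Stmt18.Gc t n) S)).card) with hNbad
    have hcount : Nbad ≤ n * (∑ c ∈ Finset.range t,
        (Stmt18.mpar t n)^c * (n / (Stmt18.mpar t n)^(c+1) + 1))^γ := by
      rw [hγt]
      rw [hNbad, hγt]
      exact Stmt18.nonDom_count ht hnn
    set m := Stmt18.mpar t n with hmdef
    have hm1 : t + 1 ≤ m := Stmt18.mpar_ge ht hnn
    have hmpos : (0:ℝ) < (m:ℝ) := by exact_mod_cast (by omega : 0 < m)
    have hq : (t+1) * m^t ≤ n := Stmt18.mpar_le t n (by omega)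
    have hmt_le : (m:ℝ)^t ≤ (n:ℝ) := by
      have : m^t ≤ n := le_trans (Nat.le_mul_of_pos_left _ (by omega)) hq
      exact_mod_cast this
    -- Dn real bound
    set Dn : ℕ := ∑ c ∈ Finset.range t, m^c * (n / m^(c+1) + 1) with hDn
    have hDnR : (Dn:ℝ) ≤ 2*(t:ℝ)*((n:ℝ)/(m:ℝ)) := by
      have hterm : ∀ c ∈ Finset.range t,
          ((m^c * (n / m^(c+1) + 1) : ℕ) : ℝ) ≤ 2*((n:ℝ)/(m:ℝ)) := by
        intro c hc
        rw [Finset.mem_range] at hc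
        push_cast
        have h1 : ((n / m^(c+1) : ℕ) : ℝ) ≤ (n:ℝ)/(m:ℝ)^(c+1) := by
          have := Nat.cast_div_le (α := ℝ) (m := n) (n := m^(c+1))
          push_cast at this
          exact this
        have h2 : (m:ℝ)^c * ((n:ℝ)/(m:ℝ)^(c+1)) = (n:ℝ)/(m:ℝ) := by
          rw [pow_succ]
          field_simp
        have h3 : (m:ℝ)^c ≤ (n:ℝ)/(m:ℝ) := by
          rw [le_div_iff₀ hmpos]
          have hm1R : (1:ℝ) ≤ (m:ℝ) := by exact_mod_cast (by omega : 1 ≤ m)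
          have hcc : (m:ℝ)^c ≤ (m:ℝ)^(t-1) := pow_le_pow_right₀ hm1R (by omega)
          calc (m:ℝ)^c * m ≤ (m:ℝ)^(t-1) * m := mul_le_mul_of_nonneg_right hcc hmpos.le
            _ = (m:ℝ)^t := by rw [← pow_succ]; congr 1; omega
            _ ≤ (n:ℝ) := hmt_le
        calc (m:ℝ)^c * (((n / m^(c+1) : ℕ) : ℝ) + 1)
            ≤ (m:ℝ)^c * ((n:ℝ)/(m:ℝ)^(c+1) + 1) := by
              apply mul_le_mul_of_nonneg_left _ (by positivity)
              linarith
          _ = (n:ℝ)/(m:ℝ) + (m:ℝ)^c := by rw [mul_add, h2, mul_one]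
          _ ≤ 2*((n:ℝ)/(m:ℝ)) := by linarith
      calc (Dn:ℝ) = ∑ c ∈ Finset.range t, ((m^c * (n / m^(c+1) + 1) : ℕ) : ℝ) := by
            rw [hDn]; exact Nat.cast_sum _ _
        _ ≤ ∑ _c ∈ Finset.range t, 2*((n:ℝ)/(m:ℝ)) := Finset.sum_le_sum hterm
        _ = 2*(t:ℝ)*((n:ℝ)/(m:ℝ)) := by
            rw [Finset.sum_const, Finset.card_range]; push_cast; ring
    -- lower bound on m
    have hlow := Stmt18.mpar_lower ht hn1
    have hmlow : ((n:ℝ)/((t:ℝ)+1)) ^ (1/(t:ℝ)) ≤ (m:ℝ) + 1 := by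
      apply Stmt18.rpow_inv_le (by omega : 0 < t) (by positivity) (by positivity)
      have : (n:ℝ) < ((t:ℝ)+1) * ((m:ℝ)+1)^t := by exact_mod_cast hlow
      rw [div_le_iff₀ (by positivity)]
      nlinarith
    have hm_half : ((n:ℝ)/((t:ℝ)+1)) ^ (1/(t:ℝ)) / 2 ≤ (m:ℝ) := by
      have : (m:ℝ) + 1 ≤ 2 * (m:ℝ) := by
        have : (1:ℝ) ≤ (m:ℝ) := by exact_mod_cast (by omega : 1 ≤ m)
        linarith
      linarith
    have hxpos : (0:ℝ) < ((n:ℝ)/((t:ℝ)+1)) ^ (1/(t:ℝ)) := by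
      apply Real.rpow_pos_of_pos
      positivity
    -- n/m bound
    have hnm : (n:ℝ)/(m:ℝ) ≤ 2*((t:ℝ)+1) * (n:ℝ)^(1 - 1/(t:ℝ)) := by
      have h1 : (n:ℝ)/(m:ℝ) ≤ (n:ℝ)/(((n:ℝ)/((t:ℝ)+1)) ^ (1/(t:ℝ)) / 2) :=
        div_le_div_of_nonneg_left hn0.le (by positivity) hm_half
      have h2 : (n:ℝ)/(((n:ℝ)/((t:ℝ)+1)) ^ (1/(t:ℝ)) / 2)
          = 2 * (n:ℝ) * (((t:ℝ)+1) ^ (1/(t:ℝ)) / (n:ℝ)^(1/(t:ℝ))) := by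
        rw [Real.div_rpow (by positivity) (by positivity)]
        field_simp
      have h3 : ((t:ℝ)+1) ^ (1/(t:ℝ)) ≤ (t:ℝ)+1 := by
        nth_rewrite 2 [← Real.rpow_one ((t:ℝ)+1)]
        apply Real.rpow_le_rpow_of_exponent_le (by linarith)
        rw [div_le_one htpos]
        linarith
      have h4 : (n:ℝ) / (n:ℝ)^(1/(t:ℝ)) = (n:ℝ)^(1 - 1/(t:ℝ)) := by
        rw [Real.rpow_sub hn0, Real.rpow_one]
      calc (n:ℝ)/(m:ℝ) ≤ 2 * (n:ℝ) * (((t:ℝ)+1) ^ (1/(t:ℝ)) / (n:ℝ)^(1/(t:ℝ))) := by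
            rw [← h2]; exact h1
        _ ≤ 2 * (n:ℝ) * (((t:ℝ)+1) / (n:ℝ)^(1/(t:ℝ))) := by
            apply mul_le_mul_of_nonneg_left _ (by positivity)
            exact (div_le_div_iff_of_pos_right (by positivity)).mpr h3
        _ = 2*((t:ℝ)+1) * ((n:ℝ) / (n:ℝ)^(1/(t:ℝ))) := by ring
        _ = 2*((t:ℝ)+1) * (n:ℝ)^(1 - 1/(t:ℝ)) := by rw [h4]
    -- final chain for part 1
    have hE : (Dn:ℝ) ≤ 4*(t:ℝ)*((t:ℝ)+1) * (n:ℝ)^(1 - 1/(t:ℝ)) := by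
      calc (Dn:ℝ) ≤ 2*(t:ℝ)*((n:ℝ)/(m:ℝ)) := hDnR
        _ ≤ 2*(t:ℝ)*(2*((t:ℝ)+1) * (n:ℝ)^(1 - 1/(t:ℝ))) :=
            mul_le_mul_of_nonneg_left hnm (by positivity)
        _ = 4*(t:ℝ)*((t:ℝ)+1) * (n:ℝ)^(1 - 1/(t:ℝ)) := by ring
    have hNbadR : (Nbad:ℝ) ≤ (4*(t:ℝ)*((t:ℝ)+1))^γ * (n:ℝ)^((γ:ℝ) - 1/((γ:ℝ)-1)) := by
      calc (Nbad:ℝ) ≤ (n:ℝ) * (Dn:ℝ)^γ := by exact_mod_cast hcount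
        _ ≤ (n:ℝ) * (4*(t:ℝ)*((t:ℝ)+1) * (n:ℝ)^(1 - 1/(t:ℝ)))^γ :=
            mul_le_mul_of_nonneg_left (pow_le_pow_left₀ (by positivity) hE γ) hn0.le
        _ = (4*(t:ℝ)*((t:ℝ)+1))^γ * ((n:ℝ) * ((n:ℝ)^(1 - 1/(t:ℝ)))^γ) := by
            rw [mul_pow]; ring
        _ = _ := by rw [hexp1 n hn1]
    have hlog : 1 ≤ Real.log n := by
      rw [Real.le_log_iff_exp_le hn0]
      calc Real.exp 1 ≤ 2.7182818286 := Real.exp_one_lt_d9.le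
        _ ≤ 3 := by norm_num
        _ ≤ (n:ℝ) := by exact_mod_cast hn3
    have hlogp : 1 ≤ (Real.log n)^γ := by
      calc (1:ℝ) = 1^γ := (one_pow γ).symm
        _ ≤ _ := pow_le_pow_left₀ (by norm_num) hlog γ
    have hfinal : (Nbad:ℝ) ≤
        (4*(t:ℝ)*((t:ℝ)+1))^γ * Real.log n ^ γ * (n:ℝ)^((γ:ℝ) - 1/((γ:ℝ)-1)) := by
      calc (Nbad:ℝ) ≤ (4*(t:ℝ)*((t:ℝ)+1))^γ * (n:ℝ)^((γ:ℝ) - 1/((γ:ℝ)-1)) := hNbadR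
        _ = (4*(t:ℝ)*((t:ℝ)+1))^γ * 1 * (n:ℝ)^((γ:ℝ) - 1/((γ:ℝ)-1)) := by ring
        _ ≤ _ := by
            apply mul_le_mul_of_nonneg_right _ (by positivity)
            exact mul_le_mul_of_nonneg_left hlogp (by positivity)
    have hdceq : (domCount (Stmt18.Gc t n) γ : ℝ) + (Nbad:ℝ) = (n.choose γ : ℝ) := by
      exact_mod_cast hid
    have hMR : (domCount (Stmt18.Gc t n) γ : ℝ) ≤ (M n : ℝ) := by exact_mod_cast hMn
    linarith
  · -- UPPER BOUND
    refine ⟨((4*((t.factorial:ℝ)))^γ * (γ.factorial:ℝ))⁻¹, by positivity,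
      (t+1)^(t+1) * 2^(t+1) + 2*t + (4*γ*t.factorial)^2 + 3, fun n hn => ?_⟩
    set c : ℝ := ((4*((t.factorial:ℝ)))^γ * (γ.factorial:ℝ))⁻¹ with hcdef
    have hcpos : (0:ℝ) < c := by rw [hcdef]; positivity
    have hn1 : 1 ≤ n := by omega
    have hn0 : (0:ℝ) < (n:ℝ) := by exact_mod_cast hn1
    have hnn : (t+1)^(t+1) * 2^(t+1) ≤ n := by omega
    have hn2t : 2*t ≤ n := by omega
    have hnB : (4*γ*t.factorial)^2 ≤ n := by omega
    have htf1 : (1:ℝ) ≤ (t.factorial:ℝ) := by exact_mod_cast t.factorial_pos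
    -- M n is attained by some graph G
    have hne : {k | ∃ G : SimpleGraph (Fin n), domNum G = γ ∧ domCount G γ = k}.Nonempty :=
      ⟨domCount (Stmt18.Gc t n) γ, Stmt18.Gc t n,
        by rw [Stmt18.domNum_Gc ht hnn, hγt], rfl⟩
    have hmem : M n ∈ {k | ∃ G : SimpleGraph (Fin n),
        domNum G = γ ∧ domCount G γ = k} := by
      rw [hM n]; exact Nat.sSup_mem hne (hbdd n)
    obtain ⟨G, hGdom, hGcount⟩ := hmem
    obtain ⟨mstar, hms1, hms2⟩ := Stmt18.upper_per_graph ht (by omega) G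
      (by rw [hGdom, hγt])
    have hmsR : (0:ℝ) ≤ (mstar:ℝ) := by positivity
    -- lower bound on mstar
    have hd1 : ((n:ℝ)/2)^t ≤ (t.factorial:ℝ) * ((n:ℝ) * (mstar:ℝ)^t) := by
      have ha : (n+1-t)^t ≤ t.factorial * n.choose t := by
        have h1 := Nat.pow_sub_le_descFactorial n t
        rwa [Nat.descFactorial_eq_factorial_mul_choose] at h1
      have hb : t.factorial * n.choose t ≤ t.factorial * (n * mstar^t) :=
        Nat.mul_le_mul_left _ hms1
      have hnhalf : (n:ℝ)/2 ≤ ((n+1-t:ℕ):ℝ) := by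
        rw [Nat.cast_sub (by omega)]
        push_cast
        have h2 : (2*(t:ℝ)) ≤ (n:ℝ) := by exact_mod_cast hn2t
        linarith
      calc ((n:ℝ)/2)^t ≤ ((n+1-t:ℕ):ℝ)^t := pow_le_pow_left₀ (by positivity) hnhalf t
        _ ≤ ((t.factorial * (n * mstar^t) : ℕ):ℝ) := by
            exact_mod_cast le_trans ha hb
        _ = (t.factorial:ℝ) * ((n:ℝ) * (mstar:ℝ)^t) := by push_cast; ring
    have hd2 : (n:ℝ)^(t-1:ℕ) / (2^t * (t.factorial:ℝ)) ≤ (mstar:ℝ)^t := by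
      rw [div_le_iff₀ (by positivity)]
      have hnt : (n:ℝ)^(t:ℕ) = (n:ℝ)^(t-1:ℕ) * n := by
        rw [← pow_succ]; congr 1; omega
      have h3 := hd1
      rw [div_pow, div_le_iff₀ (by positivity)] at h3
      -- h3 : n^t ≤ t! * (n * mstar^t) * 2^t
      rw [hnt] at h3
      have h4 : (0:ℝ) < (n:ℝ) := hn0
      nlinarith [h3, pow_nonneg hmsR t, pow_nonneg hn0.le (t-1:ℕ)]
    have hd3 : ((n:ℝ)^(t-1:ℕ) / (2^t * (t.factorial:ℝ))) ^ (1/(t:ℝ)) ≤ (mstar:ℝ) :=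
      Stmt18.rpow_inv_le (by omega) hmsR (by positivity) hd2
    set Q : ℝ := (n:ℝ)^(1 - 1/(t:ℝ)) / (2 * (t.factorial:ℝ)) with hQdef
    have hQpos : (0:ℝ) < Q := by rw [hQdef]; positivity
    have hQle : Q ≤ (mstar:ℝ) := by
      refine le_trans ?_ hd3
      rw [Real.div_rpow (by positivity) (by positivity)]
      have hnum : ((n:ℝ)^(t-1:ℕ))^(1/(t:ℝ)) = (n:ℝ)^(1 - 1/(t:ℝ)) := by
        rw [← Real.rpow_natCast (n:ℝ) (t-1), ← Real.rpow_mul hn0.le]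
        congr 1
        have hcast : ((t-1:ℕ):ℝ) = (t:ℝ) - 1 := by
          rw [Nat.cast_sub (by omega)]; push_cast; ring
        rw [hcast]
        field_simp
      have hden : ((2:ℝ)^t * (t.factorial:ℝ))^(1/(t:ℝ)) ≤ 2 * (t.factorial:ℝ) := by
        rw [Real.mul_rpow (by positivity) (by positivity)]
        have h21 : ((2:ℝ)^t)^(1/(t:ℝ)) = 2 := by
          rw [← Real.rpow_natCast (2:ℝ) t, ← Real.rpow_mul (by norm_num : (0:ℝ) ≤ 2),
            mul_one_div, div_self htne, Real.rpow_one]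
        rw [h21]
        apply mul_le_mul_of_nonneg_left _ (by norm_num)
        nth_rewrite 2 [← Real.rpow_one ((t.factorial:ℝ))]
        apply Real.rpow_le_rpow_of_exponent_le htf1
        rw [div_le_one htpos]
        linarith
      rw [hnum, hQdef]
      exact div_le_div_of_nonneg_left (by positivity) (by positivity) hden
    -- mstar ≥ 2γ
    have hQ2γ : 2*(γ:ℝ) ≤ Q := by
      rw [hQdef, le_div_iff₀ (by positivity)]
      have hs : ((4*γ*t.factorial:ℕ):ℝ) ≤ (n:ℝ)^(1/((2:ℕ):ℝ)) := by
        apply Stmt18.le_rpow_inv (by norm_num) (by positivity)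
        exact_mod_cast hnB
      have hhalf : (n:ℝ)^(1/((2:ℕ):ℝ)) ≤ (n:ℝ)^(1 - 1/(t:ℝ)) := by
        apply Real.rpow_le_rpow_of_exponent_le (by exact_mod_cast hn1)
        have h6 : 1/(t:ℝ) ≤ 1/2 := by
          apply div_le_div_of_nonneg_left (by norm_num) (by norm_num) ht2R
        push_cast
        linarith
      calc 2*(γ:ℝ)*(2*(t.factorial:ℝ)) = ((4*γ*t.factorial:ℕ):ℝ) := by push_cast; ring
        _ ≤ (n:ℝ)^(1/((2:ℕ):ℝ)) := hs
        _ ≤ _ := hhalf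
    have hms2γR : 2*(γ:ℝ) ≤ (mstar:ℝ) := le_trans hQ2γ hQle
    have hmsγ : γ ≤ mstar := by
      have hγ0 : (0:ℝ) ≤ (γ:ℝ) := by positivity
      have : (γ:ℝ) ≤ (mstar:ℝ) := by linarith
      exact_mod_cast this
    -- binomial lower bound
    have he1 : Q/2 ≤ ((mstar+1-γ:ℕ):ℝ) := by
      rw [Nat.cast_sub (by omega)]
      push_cast
      linarith
    have he2 : (Q/2)^γ ≤ (γ.factorial:ℝ) * (mstar.choose γ : ℝ) := by
      have ha := Nat.pow_sub_le_descFactorial mstar γ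
      rw [Nat.descFactorial_eq_factorial_mul_choose] at ha
      calc (Q/2)^γ ≤ ((mstar+1-γ:ℕ):ℝ)^γ := pow_le_pow_left₀ (by positivity) he1 γ
        _ = (((mstar+1-γ)^γ : ℕ):ℝ) := by push_cast; ring
        _ ≤ _ := by exact_mod_cast ha
    have hQpow : (Q/2)^γ = ((n:ℝ)^(1-1/(t:ℝ)))^γ / (4*(t.factorial:ℝ))^γ := by
      have h7 : Q/2 = (n:ℝ)^(1-1/(t:ℝ))/(4*(t.factorial:ℝ)) := by
        rw [hQdef, div_div]
        congr 1
        ring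
      rw [h7, div_pow]
    have hexp2 : ((n:ℝ)^(1 - 1/(t:ℝ)))^γ = (n:ℝ)^((γ:ℝ) - 1 - 1/((γ:ℝ)-1)) := by
      rw [← Real.rpow_natCast ((n:ℝ)^(1-1/(t:ℝ))) γ, ← Real.rpow_mul hn0.le]
      congr 1
      rw [htR]
      have h1 : (t:ℝ) + 1 - 1 = (t:ℝ) := by ring
      rw [h1]
      field_simp
      ring
    have hfin : c * (n:ℝ)^((γ:ℝ)-1-1/((γ:ℝ)-1)) ≤ (mstar.choose γ : ℝ) := by
      have h8 := he2
      rw [hQpow, div_le_iff₀ (by positivity)] at h8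
      have h9 : ((n:ℝ)^(1-1/(t:ℝ)))^γ ≤
          ((4*((t.factorial:ℝ)))^γ * (γ.factorial:ℝ)) * (mstar.choose γ : ℝ) := by
        nlinarith [h8]
      calc c * (n:ℝ)^((γ:ℝ)-1-1/((γ:ℝ)-1)) = c * ((n:ℝ)^(1-1/(t:ℝ)))^γ := by
            rw [hexp2]
        _ ≤ c * (((4*((t.factorial:ℝ)))^γ * (γ.factorial:ℝ)) * (mstar.choose γ : ℝ)) :=
            mul_le_mul_of_nonneg_left h9 hcpos.le
        _ = (mstar.choose γ : ℝ) := by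
            rw [hcdef]
            field_simp
    have hms2R : (mstar.choose γ : ℝ) + (domCount G γ : ℝ) ≤ (n.choose γ : ℝ) := by
      have := hms2
      rw [← hγt] at this
      exact_mod_cast this
    rw [← hGcount]
    linarith
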